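/- For every integer k ≥ 2, the sequence {b_k(n)}_{n=0}^∞ of Bell numbers of order k is log-convex, i.e., b_k(n)·b_k(n+2) ≥ b_k(n+1)² for all n ≥ 0. -/

import Mathlib

open scoped Nat

/-- The `k`-times iterated exponential function: `expIter 0 = id`,
`expIter (k+1) x = exp (expIter k x)`. -/
noncomputable def expIter : ℕ → ℝ → ℝ
  | 0 => id
  | k + 1 => fun x => Real.exp (expIter k x)

/-- `BellB k n` is the `n`-th derivative of the `k`-times iterated exponential at `0`,
so that `expIter k x = ∑ n, BellB k n * x ^ n / n !`. -/
noncomputable def BellB (k n : ℕ) : ℝ := iteratedDeriv n (expIter k) 0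

/-- The Bell numbers of order `k`: `bellOrd k n = BellB k n / expIter k 0`. -/
noncomputable def bellOrd (k n : ℕ) : ℝ := BellB k n / expIter k 0

/-- A function has an "exponential representation" if it is a nonnegative combination
of exponentials `exp (a i * x)` with nonnegative rates. -/
def ExpRepr (f : ℝ → ℝ) : Prop :=
  ∃ (ι : Type) (c a : ι → ℝ), (∀ i, 0 ≤ c i) ∧ (∀ i, 0 ≤ a i) ∧
    ∀ x : ℝ, HasSum (fun i => c i * Real.exp (a i * x)) (f x)

set_option maxHeartbeats 1000000 in
lemma expRepr_exp_comp {f : ℝ → ℝ} (hf : ExpRepr f) : ExpRepr (fun x => Real.exp (f x)) := by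
  obtain ⟨ι, c, a, hc, ha, hsum⟩ := hf
  refine ⟨(m : ℕ) × (Fin m → ι), fun p => (∏ j, c (p.2 j)) / p.1 !,
    fun p => ∑ j, a (p.2 j),
    fun p => div_nonneg (Finset.prod_nonneg fun j _ => hc _) (by positivity),
    fun p => Finset.sum_nonneg fun j _ => ha _, fun x => ?_⟩
  -- powers
  have hpow : ∀ m : ℕ, HasSum
      (fun v : Fin m → ι => (∏ j, c (v j)) * Real.exp ((∑ j, a (v j)) * x)) (f x ^ m) := by
    intro m
    induction m with
    | zero =>
      have h0 : HasSum (fun v : Fin 0 → ι =>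
          (∏ j, c (v j)) * Real.exp ((∑ j, a (v j)) * x))
          ((∏ j : Fin 0, c ((default : Fin 0 → ι) j)) *
            Real.exp ((∑ j : Fin 0, a ((default : Fin 0 → ι) j)) * x)) :=
        hasSum_single (default : Fin 0 → ι) (fun b hb => absurd (Subsingleton.elim b default) hb)
      simpa using h0
    | succ m ih =>
      have hmul := (hsum x).mul ih (Summable.mul_of_nonneg (hsum x).summable ih.summable
        (fun i => mul_nonneg (hc i) (Real.exp_nonneg _))
        (fun v => mul_nonneg (Finset.prod_nonneg fun j _ => hc _) (Real.exp_nonneg _)))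
      have h2 := ((Fin.consEquiv fun _ => ι).symm.hasSum_iff).2 hmul
      rw [pow_succ']
      refine h2.congr_fun fun v => ?_
      simp only [Function.comp_apply, Fin.consEquiv_symm_apply, Fin.tail_def]
      rw [Fin.prod_univ_succ, Fin.sum_univ_succ, add_mul, Real.exp_add]
      ring
  -- the outer exponential series
  have houter : HasSum (fun m : ℕ => f x ^ m / m !) (Real.exp (f x)) := by
    rw [Real.exp_eq_exp_ℝ]
    exact NormedSpace.expSeries_div_hasSum_exp (f x)
  -- fibers
  have hfib : ∀ m : ℕ, HasSum (fun v : Fin m → ι =>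
      ((∏ j, c (v j)) / m !) * Real.exp ((∑ j, a (v j)) * x)) (f x ^ m / m !) := by
    intro m
    refine ((hpow m).div_const (m ! : ℝ)).congr_fun fun v => ?_
    ring
  -- summability on the sigma type
  have hnonneg : ∀ p : (m : ℕ) × (Fin m → ι),
      0 ≤ ((∏ j, c (p.2 j)) / p.1 !) * Real.exp ((∑ j, a (p.2 j)) * x) := fun p =>
    mul_nonneg (div_nonneg (Finset.prod_nonneg fun j _ => hc _) (by positivity))
      (Real.exp_nonneg _)
  have hsummable : Summable (fun p : (m : ℕ) × (Fin m → ι) =>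
      ((∏ j, c (p.2 j)) / p.1 !) * Real.exp ((∑ j, a (p.2 j)) * x)) := by
    refine (summable_sigma_of_nonneg hnonneg).2 ⟨fun m => (hfib m).summable, ?_⟩
    exact Summable.congr houter.summable fun m => ((hfib m).tsum_eq).symm
  exact HasSum.sigma_of_hasSum houter hfib hsummable

lemma expRepr_expIter (k : ℕ) : ExpRepr (expIter (k + 1)) := by
  induction k with
  | zero =>
    refine ⟨Unit, fun _ => 1, fun _ => 1, fun _ => zero_le_one, fun _ => zero_le_one, fun x => ?_⟩
    have h0 : HasSum (fun _ : Unit => (1:ℝ) * Real.exp (1 * x)) ((1:ℝ) * Real.exp (1 * x)) :=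
      hasSum_single default (fun b hb => absurd (Subsingleton.elim b default) hb)
    simpa [expIter] using h0
  | succ k ih => exact expRepr_exp_comp ih

section Moments

variable {ι : Type} {c a : ι → ℝ} {f : ℝ → ℝ}

lemma moment_term_nonneg (hc : ∀ i, 0 ≤ c i) (ha : ∀ i, 0 ≤ a i) (n : ℕ) (i : ι) (y : ℝ) :
    0 ≤ c i * a i ^ n * Real.exp (a i * y) :=
  mul_nonneg (mul_nonneg (hc i) (pow_nonneg (ha i) n)) (Real.exp_nonneg _)

/-- Bound: `c i * a i ^ n * exp (a i * y) ≤ n ! * (c i * exp (a i * 2))` for `y ≤ 1`. -/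
lemma moment_bound (hc : ∀ i, 0 ≤ c i) (ha : ∀ i, 0 ≤ a i) (n : ℕ) (i : ι) {y : ℝ}
    (hy : y ≤ 1) : c i * a i ^ n * Real.exp (a i * y) ≤ n ! * (c i * Real.exp (a i * 2)) := by
  have h1 : a i ^ n ≤ n ! * Real.exp (a i) := by
    have h := Real.pow_div_factorial_le_exp (a i) (ha i) n
    rw [div_le_iff₀ (by positivity : (0:ℝ) < (n ! : ℝ))] at h
    linarith [h]
  have h2 : Real.exp (a i * y) ≤ Real.exp (a i) := by
    apply Real.exp_le_exp.2
    nlinarith [ha i]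
  calc c i * a i ^ n * Real.exp (a i * y)
      ≤ c i * (n ! * Real.exp (a i)) * Real.exp (a i) := by
        exact mul_le_mul (mul_le_mul_of_nonneg_left h1 (hc i)) h2 (Real.exp_nonneg _)
          (mul_nonneg (hc i) (by positivity))
    _ = n ! * (c i * Real.exp (a i * 2)) := by
        rw [show a i * 2 = a i + a i by ring, Real.exp_add]; ring

lemma summable_moment (hc : ∀ i, 0 ≤ c i) (ha : ∀ i, 0 ≤ a i)
    (hf : ∀ x : ℝ, HasSum (fun i => c i * Real.exp (a i * x)) (f x)) (n : ℕ) {y : ℝ}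
    (hy : y ≤ 1) : Summable fun i => c i * a i ^ n * Real.exp (a i * y) := by
  refine Summable.of_nonneg_of_le (fun i => moment_term_nonneg hc ha n i y)
    (fun i => moment_bound hc ha n i hy) ?_
  exact ((hf 2).summable).mul_left _

lemma summable_moment' (hc : ∀ i, 0 ≤ c i) (ha : ∀ i, 0 ≤ a i)
    (hf : ∀ x : ℝ, HasSum (fun i => c i * Real.exp (a i * x)) (f x)) (n : ℕ) :
    Summable fun i => c i * a i ^ n := by
  refine (summable_moment hc ha hf n (y := 0) zero_le_one).congr fun i => ?_
  rw [mul_zero, Real.exp_zero, mul_one]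

/-- The key analytic lemma: iterated derivatives at `0` are the moments. -/
lemma iteratedDeriv_eq_moment (hc : ∀ i, 0 ≤ c i) (ha : ∀ i, 0 ≤ a i)
    (hf : ∀ x : ℝ, HasSum (fun i => c i * Real.exp (a i * x)) (f x)) (n : ℕ) :
    iteratedDeriv n f 0 = ∑' i, c i * a i ^ n := by
  set g : ℕ → ℝ → ℝ := fun n x => ∑' i, c i * a i ^ n * Real.exp (a i * x) with hg
  have hball : ∀ y : ℝ, y ∈ Metric.ball (0:ℝ) 1 → y ≤ 1 := by
    intro y hy
    rw [Metric.mem_ball, Real.dist_eq, sub_zero] at hy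
    linarith [abs_le.1 hy.le]
  have hderiv : ∀ m : ℕ, ∀ y ∈ Metric.ball (0:ℝ) 1, HasDerivAt (g m) (g (m + 1) y) y := by
    intro m y hy
    refine hasDerivAt_tsum_of_isPreconnected
      (u := fun i => (m + 1)! * (c i * Real.exp (a i * 2)))
      (((hf 2).summable).mul_left _) Metric.isOpen_ball
      (convex_ball (0:ℝ) 1).isPreconnected
      (g := fun i z => c i * a i ^ m * Real.exp (a i * z))
      (g' := fun i z => c i * a i ^ (m + 1) * Real.exp (a i * z))
      (fun i z _ => ?_) (fun i z hz => ?_) (Metric.mem_ball_self one_pos)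
      (summable_moment hc ha hf m (by norm_num : (0:ℝ) ≤ 1)) hy
    · have h1 : HasDerivAt (fun z : ℝ => a i * z) (a i * 1) z := (hasDerivAt_id z).const_mul (a i)
      have h2 := (h1.exp).const_mul (c i * a i ^ m)
      exact h2.congr_deriv (by ring)
    · rw [Real.norm_eq_abs, abs_of_nonneg (moment_term_nonneg hc ha (m + 1) i z)]
      exact moment_bound hc ha (m + 1) i (hball z hz)
  have heq : ∀ m : ℕ, ∀ y ∈ Metric.ball (0:ℝ) 1, iteratedDeriv m f y = g m y := by
    intro m
    induction m with
    | zero =>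
      intro y _
      rw [iteratedDeriv_zero]
      have hfy : f y = ∑' i, c i * Real.exp (a i * y) := ((hf y).tsum_eq).symm
      rw [hfy, hg]
      exact tsum_congr fun i => by rw [pow_zero, mul_one]
    | succ m ih =>
      intro y hy
      rw [iteratedDeriv_succ]
      have h1 : iteratedDeriv m f =ᶠ[nhds y] g m :=
        Filter.eventuallyEq_of_mem (Metric.isOpen_ball.mem_nhds hy) ih
      rw [h1.deriv_eq]
      exact (hderiv m y hy).deriv
  have h0 := heq n 0 (Metric.mem_ball_self one_pos)
  rw [h0, hg]
  exact tsum_congr fun i => by rw [mul_zero, Real.exp_zero, mul_one]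

/-- Cauchy–Schwarz for the moments. -/
lemma moment_cauchy_schwarz (hc : ∀ i, 0 ≤ c i) (ha : ∀ i, 0 ≤ a i)
    (hs : ∀ n : ℕ, Summable fun i => c i * a i ^ n) (n : ℕ) :
    (∑' i, c i * a i ^ (n + 1)) ^ 2 ≤ (∑' i, c i * a i ^ n) * ∑' i, c i * a i ^ (n + 2) := by
  have hnn : ∀ (m : ℕ) (i : ι), 0 ≤ c i * a i ^ m := fun m i =>
    mul_nonneg (hc i) (pow_nonneg (ha i) m)
  have key : ∀ s : Finset ι,
      (∑ i ∈ s, c i * a i ^ (n + 1)) ^ 2 ≤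
        (∑' i, c i * a i ^ n) * ∑' i, c i * a i ^ (n + 2) := by
    intro s
    have hCS := Finset.sum_mul_sq_le_sq_mul_sq s (fun i => Real.sqrt (c i * a i ^ n))
      (fun i => Real.sqrt (c i * a i ^ (n + 2)))
    have h1 : ∀ i : ι, Real.sqrt (c i * a i ^ n) * Real.sqrt (c i * a i ^ (n + 2)) =
        c i * a i ^ (n + 1) := by
      intro i
      rw [← Real.sqrt_mul (hnn n i)]
      rw [show c i * a i ^ n * (c i * a i ^ (n + 2)) = (c i * a i ^ (n + 1)) ^ 2 by ring,
        Real.sqrt_sq (hnn (n + 1) i)]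
    have h2 : ∀ i : ι, Real.sqrt (c i * a i ^ n) ^ 2 = c i * a i ^ n := fun i =>
      Real.sq_sqrt (hnn n i)
    have h3 : ∀ i : ι, Real.sqrt (c i * a i ^ (n + 2)) ^ 2 = c i * a i ^ (n + 2) := fun i =>
      Real.sq_sqrt (hnn (n + 2) i)
    simp only [h1, h2, h3] at hCS
    refine hCS.trans ?_
    have hA : ∑ i ∈ s, c i * a i ^ n ≤ ∑' i, c i * a i ^ n :=
      Summable.sum_le_tsum s (fun i _ => hnn n i) (hs n)
    have hB : ∑ i ∈ s, c i * a i ^ (n + 2) ≤ ∑' i, c i * a i ^ (n + 2) :=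
      Summable.sum_le_tsum s (fun i _ => hnn (n + 2) i) (hs (n + 2))
    exact mul_le_mul hA hB (Finset.sum_nonneg fun i _ => hnn (n + 2) i)
      ((Finset.sum_nonneg fun i _ => hnn n i).trans hA)
  have hT0 : Filter.Tendsto (fun s : Finset ι => ∑ i ∈ s, c i * a i ^ (n + 1))
      Filter.atTop (nhds (∑' i, c i * a i ^ (n + 1))) := (hs (n + 1)).hasSum
  have hT := hT0.pow 2
  exact le_of_tendsto hT (Filter.Eventually.of_forall key)

end Moments

/-- For every integer `k ≥ 2`, the sequence of Bell numbers of order `k` is log-convex. -/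
theorem bellOrd_log_convex (k : ℕ) (hk : 2 ≤ k) (n : ℕ) :
    bellOrd k n * bellOrd k (n + 2) ≥ bellOrd k (n + 1) ^ 2 := by
  obtain ⟨m, rfl⟩ : ∃ m, k = m + 1 := ⟨k - 1, by omega⟩
  obtain ⟨ι, c, a, hc, ha, hsum⟩ := expRepr_expIter m
  have hs : ∀ j : ℕ, Summable fun i => c i * a i ^ j := summable_moment' hc ha hsum
  have hB : ∀ j : ℕ, BellB (m + 1) j = ∑' i, c i * a i ^ j := fun j =>
    iteratedDeriv_eq_moment hc ha hsum j
  have hE : 0 < expIter (m + 1) 0 := Real.exp_pos _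
  have hCS := moment_cauchy_schwarz hc ha hs n
  rw [ge_iff_le]
  unfold bellOrd
  rw [div_mul_div_comm, div_pow, hB, hB, hB,
    show expIter (m + 1) 0 ^ 2 = expIter (m + 1) 0 * expIter (m + 1) 0 from sq _]
  exact div_le_div_of_nonneg_right hCS (mul_pos hE hE).le
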